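/- Let g : [a,∞) → ℝ be continuous, m ≥ 1 an integer, n ≥ 1, and define k(r) = (n(n+2)···(n+2(m-1)) / (2^{m-1}(m-1)!)) · r^{-(n+2(m-1))} · ∫_a^r g(τ) τ^{n-1} (r² − τ²)^{m-1} dτ. Then Q_m k = g on (a,∞), where Q_m = ((r/n)∂_r + 1)···((r/(n+2(m-1)))∂_r + 1). -/

import Mathlib

/-- The first-order operator `(r/(n+2i)) ∂_r + 1`. -/
noncomputable def Lop (n : ℝ) (i : ℕ) (g : ℝ → ℝ) : ℝ → ℝ :=
  fun r => (r / (n + 2 * i)) * deriv g r + g r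

/-- `Q_m`, rightmost factor acting first. -/
noncomputable def Qop (n : ℝ) : ℕ → (ℝ → ℝ) → ℝ → ℝ
  | 0, g => g
  | m + 1, g => Qop n m (Lop n m g)

open Set Finset MeasureTheory intervalIntegral

noncomputable def Afun (n a : ℝ) (g : ℝ → ℝ) (j : ℕ) (r : ℝ) : ℝ :=
  ∫ τ in a..r, g τ * τ ^ (n - 1) * (τ ^ 2) ^ j

noncomputable def Jfun (n a : ℝ) (g : ℝ → ℝ) (i : ℕ) (r : ℝ) : ℝ :=
  ∫ τ in a..r, g τ * τ ^ (n - 1) * (r ^ 2 - τ ^ 2) ^ i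

lemma contOnA {n a : ℝ} {g : ℝ → ℝ} (ha : 0 < a) (hg : ContinuousOn g (Ici a)) (j : ℕ) :
    ContinuousOn (fun τ => g τ * τ ^ (n - 1) * (τ ^ 2) ^ j) (Ici a) := by
  apply ContinuousOn.mul
  · exact hg.mul ((continuousOn_id' _).rpow_const fun τ hτ => Or.inl (ha.trans_le hτ).ne')
  · exact Continuous.continuousOn (by continuity)

lemma hasDerivAt_A {n a : ℝ} {g : ℝ → ℝ} (ha : 0 < a) (hg : ContinuousOn g (Ici a)) (j : ℕ)
    {r : ℝ} (hr : a < r) :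
    HasDerivAt (Afun n a g j) (g r * r ^ (n - 1) * (r ^ 2) ^ j) r := by
  have hc := contOnA ha hg (n := n) j
  have hint : IntervalIntegrable (fun τ => g τ * τ ^ (n - 1) * (τ ^ 2) ^ j) volume a r := by
    apply (hc.mono _).intervalIntegrable
    rw [uIcc_of_le hr.le]
    exact Icc_subset_Ici_self
  have hmeas : StronglyMeasurableAtFilter (fun τ => g τ * τ ^ (n - 1) * (τ ^ 2) ^ j) (nhds r)
      volume :=
    ⟨Ioi a, Ioi_mem_nhds hr, (hc.mono Ioi_subset_Ici_self).aestronglyMeasurable measurableSet_Ioi⟩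
  have hcont : ContinuousAt (fun τ => g τ * τ ^ (n - 1) * (τ ^ 2) ^ j) r :=
    hc.continuousAt (Ici_mem_nhds hr)
  exact intervalIntegral.integral_hasDerivAt_right hint hmeas hcont

lemma Jfun_eq {n a : ℝ} {g : ℝ → ℝ} (ha : 0 < a) (hg : ContinuousOn g (Ici a)) (i : ℕ)
    {r : ℝ} (hr : a < r) :
    Jfun n a g i r = ∑ j ∈ range (i + 1),
      ((-1 : ℝ) ^ (j + i) * (i.choose j : ℝ)) * ((r ^ 2) ^ j * Afun n a g (i - j) r) := by
  have key : ∀ τ : ℝ, g τ * τ ^ (n - 1) * (r ^ 2 - τ ^ 2) ^ i =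
      ∑ j ∈ range (i + 1),
        ((-1 : ℝ) ^ (j + i) * (i.choose j : ℝ)) * ((r ^ 2) ^ j *
          (g τ * τ ^ (n - 1) * (τ ^ 2) ^ (i - j))) := by
    intro τ
    rw [sub_pow, Finset.mul_sum]
    exact Finset.sum_congr rfl fun j hj => by ring
  unfold Jfun Afun
  rw [intervalIntegral.integral_congr (g := fun τ => ∑ j ∈ range (i + 1),
        ((-1 : ℝ) ^ (j + i) * (i.choose j : ℝ)) * ((r ^ 2) ^ j *
          (g τ * τ ^ (n - 1) * (τ ^ 2) ^ (i - j)))) (fun τ _ => key τ)]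
  rw [intervalIntegral.integral_finset_sum]
  · refine Finset.sum_congr rfl fun j hj => ?_
    rw [show (fun τ => ((-1 : ℝ) ^ (j + i) * (i.choose j : ℝ)) * ((r ^ 2) ^ j *
          (g τ * τ ^ (n - 1) * (τ ^ 2) ^ (i - j)))) = fun τ =>
          (((-1 : ℝ) ^ (j + i) * (i.choose j : ℝ)) * (r ^ 2) ^ j) *
          (g τ * τ ^ (n - 1) * (τ ^ 2) ^ (i - j)) from funext fun τ => by ring]
    rw [intervalIntegral.integral_const_mul]
    ring
  · intro j hj
    apply IntervalIntegrable.const_mul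
    apply IntervalIntegrable.const_mul
    apply ((contOnA ha hg (i - j)).mono _).intervalIntegrable
    rw [uIcc_of_le hr.le]; exact Icc_subset_Ici_self

lemma hasDerivAt_J0 {n a : ℝ} {g : ℝ → ℝ} (ha : 0 < a) (hg : ContinuousOn g (Ici a))
    {r : ℝ} (hr : a < r) :
    HasDerivAt (Jfun n a g 0) (g r * r ^ (n - 1)) r := by
  have h : Jfun n a g 0 = Afun n a g 0 := by
    funext x; unfold Jfun Afun; simp
  rw [h]
  simpa using hasDerivAt_A ha hg 0 hr

lemma hasDerivAt_J {n a : ℝ} {g : ℝ → ℝ} (ha : 0 < a) (hg : ContinuousOn g (Ici a)) (i : ℕ)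
    {r : ℝ} (hr : a < r) :
    HasDerivAt (Jfun n a g (i + 1)) (2 * (i + 1) * r * Jfun n a g i r) r := by
  -- derivative of each term of the binomial expansion
  have hterm : ∀ j ∈ range (i + 2),
      HasDerivAt (fun x => ((-1 : ℝ) ^ (j + (i + 1)) * ((i + 1).choose j : ℝ)) *
          ((x ^ 2) ^ j * Afun n a g (i + 1 - j) x))
        (((-1 : ℝ) ^ (j + (i + 1)) * ((i + 1).choose j : ℝ)) *
          (((j : ℝ) * (r ^ 2) ^ (j - 1) * ((2 : ℕ) * r ^ (2 - 1))) * Afun n a g (i + 1 - j) r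
            + (r ^ 2) ^ j * (g r * r ^ (n - 1) * (r ^ 2) ^ (i + 1 - j)))) r := by
    intro j hj
    exact (((hasDerivAt_pow 2 r).pow j).mul (hasDerivAt_A ha hg (i + 1 - j) hr)).const_mul _
  have hS := HasDerivAt.fun_sum hterm
  have hEq : (fun x => Jfun n a g (i + 1) x) =ᶠ[nhds r]
      (fun x => ∑ j ∈ range (i + 2),
        ((-1 : ℝ) ^ (j + (i + 1)) * ((i + 1).choose j : ℝ)) *
          ((x ^ 2) ^ j * Afun n a g (i + 1 - j) x)) := by
    filter_upwards [Ioi_mem_nhds hr] with x hx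
    exact Jfun_eq ha hg (i + 1) hx
  have hD := hS.congr_of_eventuallyEq hEq
  -- now massage the derivative value
  have hval : ∑ j ∈ range (i + 2),
      (((-1 : ℝ) ^ (j + (i + 1)) * ((i + 1).choose j : ℝ)) *
        (((j : ℝ) * (r ^ 2) ^ (j - 1) * ((2 : ℕ) * r ^ (2 - 1))) * Afun n a g (i + 1 - j) r
          + (r ^ 2) ^ j * (g r * r ^ (n - 1) * (r ^ 2) ^ (i + 1 - j))))
      = 2 * (i + 1) * r * Jfun n a g i r := by
    have hsplit : ∀ j ∈ range (i + 2),
        ((-1 : ℝ) ^ (j + (i + 1)) * ((i + 1).choose j : ℝ)) *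
          (((j : ℝ) * (r ^ 2) ^ (j - 1) * ((2 : ℕ) * r ^ (2 - 1))) * Afun n a g (i + 1 - j) r
            + (r ^ 2) ^ j * (g r * r ^ (n - 1) * (r ^ 2) ^ (i + 1 - j)))
        = ((-1 : ℝ) ^ (j + (i + 1)) * ((i + 1).choose j : ℝ)) *
            (((j : ℝ) * (r ^ 2) ^ (j - 1) * (2 * r)) * Afun n a g (i + 1 - j) r)
          + (g r * r ^ (n - 1)) *
            ((-1 : ℝ) ^ (j + (i + 1)) * (r ^ 2) ^ j * (r ^ 2) ^ (i + 1 - j) *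
              ((i + 1).choose j : ℝ)) := by
      intro j hj; push_cast; ring
    rw [Finset.sum_congr rfl hsplit, Finset.sum_add_distrib]
    have hzero : ∑ j ∈ range (i + 2), (g r * r ^ (n - 1)) *
        ((-1 : ℝ) ^ (j + (i + 1)) * (r ^ 2) ^ j * (r ^ 2) ^ (i + 1 - j) *
          ((i + 1).choose j : ℝ)) = 0 := by
      rw [← Finset.mul_sum, ← sub_pow (r ^ 2) (r ^ 2) (i + 1)]
      simp
    rw [hzero, add_zero, Finset.sum_range_succ']
    simp only [Nat.cast_zero, zero_mul, mul_zero]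
    rw [add_zero]
    have hre : ∀ j ∈ range (i + 1),
        (-1 : ℝ) ^ ((j + 1) + (i + 1)) * ((i + 1).choose (j + 1) : ℝ) *
          (((j + 1 : ℕ) : ℝ) * (r ^ 2) ^ (j + 1 - 1) * (2 * r) * Afun n a g (i + 1 - (j + 1)) r)
        = 2 * (i + 1) * r *
            ((-1 : ℝ) ^ (j + i) * (i.choose j : ℝ) * ((r ^ 2) ^ j * Afun n a g (i - j) r)) := by
      intro j hj
      have hch : ((i : ℝ) + 1) * (i.choose j : ℝ) = ((i + 1).choose (j + 1) : ℝ) * ((j : ℝ) + 1) := by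
        exact_mod_cast congrArg (Nat.cast : ℕ → ℝ) (Nat.add_one_mul_choose_eq i j)
      have hsign : (-1 : ℝ) ^ ((j + 1) + (i + 1)) = (-1 : ℝ) ^ (j + i) := by
        rw [show (j + 1) + (i + 1) = (j + i) + 2 by ring, pow_add]; norm_num
      have h1 : i + 1 - (j + 1) = i - j := by omega
      have h2 : j + 1 - 1 = j := by omega
      rw [h1, h2, hsign]
      push_cast
      linear_combination (-(2 * r * r ^ (j * 2) * Afun n a g (i - j) r *
        (-1 : ℝ) ^ j * (-1 : ℝ) ^ i)) * hch
    rw [Finset.sum_congr rfl hre, ← Finset.mul_sum, ← Jfun_eq ha hg i hr]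
  rw [hval] at hD
  exact hD

noncomputable def Kfun (n a : ℝ) (g : ℝ → ℝ) (s : ℕ) (r : ℝ) : ℝ :=
  ((∏ i ∈ range (s + 1), (n + 2 * (i : ℝ))) / (2 ^ s * (s.factorial : ℝ))) *
    (r ^ (-(n + 2 * (s : ℝ))) * Jfun n a g s r)

lemma Lbase {n a : ℝ} (hn : 0 < n) (ha : 0 < a) {g : ℝ → ℝ} (hg : ContinuousOn g (Ici a))
    (k : ℝ → ℝ) (hk : ∀ x ∈ Ioi a, k x = Kfun n a g 0 x) {r : ℝ} (hr : a < r) :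
    Lop n 0 k r = g r := by
  have hr0 : 0 < r := ha.trans hr
  have hK : HasDerivAt (Kfun n a g 0)
      (((∏ i ∈ range (0 + 1), (n + 2 * (i : ℝ))) / (2 ^ 0 * ((0:ℕ).factorial : ℝ))) *
        ((-(n + 2 * ((0:ℕ) : ℝ)) * r ^ (-(n + 2 * ((0:ℕ) : ℝ)) - 1)) * Jfun n a g 0 r
          + r ^ (-(n + 2 * ((0:ℕ) : ℝ))) * (g r * r ^ (n - 1)))) r :=
    ((Real.hasDerivAt_rpow_const (Or.inl hr0.ne')).mul (hasDerivAt_J0 ha hg hr)).const_mul _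
  have hfe : k =ᶠ[nhds r] Kfun n a g 0 := by
    filter_upwards [Ioi_mem_nhds hr] with x hx; exact hk x hx
  have hd : deriv k r = _ := hfe.deriv_eq.trans hK.deriv
  show r / (n + 2 * ((0:ℕ) : ℝ)) * deriv k r + k r = g r
  rw [hd, hk r hr]
  simp only [Kfun, Nat.cast_zero, mul_zero, add_zero, Finset.prod_range_succ, Finset.prod_range_zero, pow_zero,
    Nat.factorial_zero, Nat.cast_one, mul_one, div_one, one_mul]
  have e1 : r ^ (-n - 1) * r = r ^ (-n) := by
    rw [← Real.rpow_add_one hr0.ne']; norm_num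
  have e2 : r ^ (-n) * (r ^ (n - 1) * r) = 1 := by
    rw [← Real.rpow_add_one hr0.ne', ← Real.rpow_add hr0]
    norm_num
  calc r / n * (n * (-n * r ^ (-n - 1) * Jfun n a g 0 r
          + r ^ (-n) * (g r * r ^ (n - 1)))) + n * (r ^ (-n) * Jfun n a g 0 r)
      = -n * (r ^ (-n - 1) * r) * Jfun n a g 0 r
          + (r ^ (-n) * (r ^ (n - 1) * r)) * g r + n * (r ^ (-n) * Jfun n a g 0 r) := by
        field_simp
    _ = g r := by rw [e1, e2]; ring

lemma Lstep {n a : ℝ} (hn : 0 < n) (ha : 0 < a) {g : ℝ → ℝ} (hg : ContinuousOn g (Ici a))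
    (s : ℕ) (k : ℝ → ℝ) (hk : ∀ x ∈ Ioi a, k x = Kfun n a g (s + 1) x) {r : ℝ} (hr : a < r) :
    Lop n (s + 1) k r = Kfun n a g s r := by
  have hr0 : 0 < r := ha.trans hr
  have hK : HasDerivAt (Kfun n a g (s + 1))
      (((∏ i ∈ range (s + 1 + 1), (n + 2 * (i : ℝ))) / (2 ^ (s + 1) * ((s+1).factorial : ℝ))) *
        ((-(n + 2 * ((s + 1 : ℕ) : ℝ)) * r ^ (-(n + 2 * ((s + 1 : ℕ) : ℝ)) - 1)) *
            Jfun n a g (s + 1) r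
          + r ^ (-(n + 2 * ((s + 1 : ℕ) : ℝ))) * (2 * (s + 1) * r * Jfun n a g s r))) r :=
    ((Real.hasDerivAt_rpow_const (Or.inl hr0.ne')).mul (hasDerivAt_J ha hg s hr)).const_mul _
  have hfe : k =ᶠ[nhds r] Kfun n a g (s + 1) := by
    filter_upwards [Ioi_mem_nhds hr] with x hx; exact hk x hx
  have hd : deriv k r = _ := hfe.deriv_eq.trans hK.deriv
  show r / (n + 2 * ((s + 1 : ℕ) : ℝ)) * deriv k r + k r = Kfun n a g s r
  rw [hd, hk r hr]
  simp only [Kfun]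
  rw [Finset.prod_range_succ]
  have hA : (n + 2 * ((s + 1 : ℕ) : ℝ)) ≠ 0 := by positivity
  have e1 : r ^ (-(n + 2 * ((s + 1 : ℕ) : ℝ))) =
      r ^ (-(n + 2 * ((s + 1 : ℕ) : ℝ)) - 1) * r := by
    rw [← Real.rpow_add_one hr0.ne']; norm_num
  have e2 : r ^ (-(n + 2 * (s : ℝ))) =
      r ^ (-(n + 2 * ((s + 1 : ℕ) : ℝ)) - 1) * r ^ 3 := by
    rw [← Real.rpow_natCast r 3, ← Real.rpow_add hr0]
    congr 1
    push_cast
    ring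
  rw [e1, e2]
  have hfac : ((s).factorial : ℝ) ≠ 0 := Nat.cast_ne_zero.mpr s.factorial_ne_zero
  push_cast [Nat.factorial_succ, pow_succ]
  field_simp
  ring

lemma Qkey {n a : ℝ} (hn : 0 < n) (ha : 0 < a) {g : ℝ → ℝ} (hg : ContinuousOn g (Ici a)) :
    ∀ s : ℕ, ∀ k : ℝ → ℝ, (∀ x ∈ Ioi a, k x = Kfun n a g s x) →
      ∀ r, a < r → Qop n (s + 1) k r = g r := by
  intro s
  induction s with
  | zero =>
    intro k hk r hr
    show Qop n 0 (Lop n 0 k) r = g r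
    show Lop n 0 k r = g r
    exact Lbase hn ha hg k hk hr
  | succ s ih =>
    intro k hk r hr
    show Qop n (s + 1) (Lop n (s + 1) k) r = g r
    exact ih (Lop n (s + 1) k) (fun x hx => Lstep hn ha hg s k hk hx) r hr

/-- The particular solution
`k(r) = (n(n+2)⋯(n+2(m-1)) / (2^{m-1}(m-1)!)) r^{-(n+2(m-1))} ∫_a^r g(τ) τ^{n-1}(r²-τ²)^{m-1} dτ`
satisfies `Q_m k = g` on `(a,∞)`. -/
theorem Qm_particular_solution (n : ℝ) (hn : 0 < n) (m : ℕ) (hm : 1 ≤ m)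
    (a : ℝ) (ha : 0 < a) (g : ℝ → ℝ) (hg : ContinuousOn g (Set.Ici a))
    (k : ℝ → ℝ)
    (hk : ∀ r, k r =
      ((∏ i ∈ Finset.range m, (n + 2 * i)) / (2 ^ (m - 1) * (Nat.factorial (m - 1) : ℝ)))
        * r ^ (-(n + 2 * ((m : ℝ) - 1)))
        * ∫ τ in a..r, g τ * τ ^ (n - 1) * (r ^ 2 - τ ^ 2) ^ (m - 1)) :
    ∀ r, a < r → Qop n m k r = g r := by
  obtain ⟨s, rfl⟩ : ∃ s, m = s + 1 := ⟨m - 1, (Nat.succ_pred_eq_of_pos hm).symm⟩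
  refine Qkey hn ha hg s k ?_
  intro x hx
  rw [hk x]
  have hcast : ((s + 1 : ℕ) : ℝ) - 1 = (s : ℝ) := by push_cast; ring
  rw [Nat.add_sub_cancel, hcast]
  simp only [Kfun, Jfun, mul_assoc]
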